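/- The cycle graph $C_k$ on $k\ge 3$ vertices is unmixed (all minimal vertex covers have equal cardinality) if and only if $k \in \{3,4,5,7\}$. -/

import Mathlib

/-- The cycle graph `C_k` on `ZMod k`. -/
def cycleG (k : ℕ) : SimpleGraph (ZMod k) where
  Adj i j := i ≠ j ∧ (j = i + 1 ∨ i = j + 1)
  symm := by constructor; rintro i j ⟨h1, h2⟩; exact ⟨h1.symm, h2.symm⟩
  loopless := by constructor; rintro i ⟨h1, _⟩; exact h1 rfl

/-- A vertex cover of a graph on `ZMod k`. -/
def IsVCov {k : ℕ} (G : SimpleGraph (ZMod k)) (C : Finset (ZMod k)) : Prop :=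
  ∀ ⦃i j⦄, G.Adj i j → i ∈ C ∨ j ∈ C

/-- A minimal vertex cover. -/
def IsMinVCov {k : ℕ} (G : SimpleGraph (ZMod k)) (C : Finset (ZMod k)) : Prop :=
  IsVCov G C ∧ ∀ C' ⊆ C, IsVCov G C' → C' = C

instance (k : ℕ) : DecidableRel (cycleG k).Adj :=
  fun i j => inferInstanceAs (Decidable (i ≠ j ∧ (j = i + 1 ∨ i = j + 1)))

instance {k : ℕ} [NeZero k] (G : SimpleGraph (ZMod k)) [DecidableRel G.Adj]
    (C : Finset (ZMod k)) : Decidable (IsVCov G C) :=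
  inferInstanceAs (Decidable (∀ i j, G.Adj i j → i ∈ C ∨ j ∈ C))

section helpers

variable {k : ℕ}

lemma cyc_one_ne_zero (hk : 3 ≤ k) : (1 : ZMod k) ≠ 0 := by
  haveI : Fact (1 < k) := ⟨by omega⟩
  intro h
  have := congrArg ZMod.val h
  rw [ZMod.val_one, ZMod.val_zero] at this
  exact one_ne_zero this

lemma adj_succ (hk : 3 ≤ k) (v : ZMod k) : (cycleG k).Adj v (v + 1) := by
  refine ⟨fun h => cyc_one_ne_zero hk ?_, Or.inl rfl⟩
  have := congrArg (· - v) h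
  simpa using this.symm

lemma adj_pred (hk : 3 ≤ k) (v : ZMod k) : (cycleG k).Adj v (v - 1) := by
  refine ⟨fun h => cyc_one_ne_zero hk ?_, Or.inr (by ring)⟩
  have := congrArg (· - v) h.symm
  simpa using this

/-- A cover is a minimal cover iff each of its vertices has a neighbor outside. -/
lemma minVCov_iff (hk : 3 ≤ k) (C : Finset (ZMod k)) :
    IsMinVCov (cycleG k) C ↔
      IsVCov (cycleG k) C ∧ ∀ v ∈ C, (v + 1 ∉ C ∨ v - 1 ∉ C) := by
  constructor
  · rintro ⟨hc, hmin⟩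
    refine ⟨hc, fun v hv => ?_⟩
    by_contra h
    push_neg at h
    obtain ⟨h1, h2⟩ := h
    have hcov' : IsVCov (cycleG k) (C.erase v) := by
      intro i j hadj
      rcases hc hadj with hi | hj
      · by_cases hiv : i = v
        · subst hiv
          right
          rcases hadj.2 with hj1 | hj1
          · subst hj1; exact Finset.mem_erase.mpr ⟨(hadj.1).symm, h1⟩
          · have : j = i - 1 := by rw [hj1]; ring
            subst this; exact Finset.mem_erase.mpr ⟨fun hh => hadj.1 hh.symm, h2⟩
        · exact Or.inl (Finset.mem_erase.mpr ⟨hiv, hi⟩)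
      · by_cases hjv : j = v
        · subst hjv
          left
          rcases hadj.2 with hj1 | hj1
          · have : i = j - 1 := by rw [hj1]; ring
            subst this; exact Finset.mem_erase.mpr ⟨hadj.1, h2⟩
          · subst hj1; exact Finset.mem_erase.mpr ⟨hadj.1, h1⟩
        · exact Or.inr (Finset.mem_erase.mpr ⟨hjv, hj⟩)
    have := hmin (C.erase v) (Finset.erase_subset v C) hcov'
    have hv' : v ∈ C.erase v := this.symm ▸ hv
    exact (Finset.notMem_erase v C) hv'
  · rintro ⟨hc, hnb⟩
    refine ⟨hc, fun C' hsub hcov' => Finset.Subset.antisymm hsub (fun v hv => ?_)⟩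
    rcases hnb v hv with h1 | h1
    · rcases hcov' (adj_succ hk v) with h | h
      · exact h
      · exact absurd (hsub h) h1
    · rcases hcov' (adj_pred hk v) with h | h
      · exact h
      · exact absurd (hsub h) h1

lemma val_add_one (hk : 3 ≤ k) (v : ZMod k) : (v + 1).val = (v.val + 1) % k := by
  haveI : NeZero k := ⟨by omega⟩
  haveI : Fact (1 < k) := ⟨by omega⟩
  rw [ZMod.val_add, ZMod.val_one]

lemma val_sub_one (hk : 3 ≤ k) (v : ZMod k) : (v - 1).val = (v.val + (k - 1)) % k := by
  haveI : NeZero k := ⟨by omega⟩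
  have h1 : ((k - 1 : ℕ) : ZMod k) = -1 := by
    have h2 : ((k : ℕ) : ZMod k) = 0 := ZMod.natCast_self k
    rw [Nat.cast_sub (by omega : 1 ≤ k), h2, Nat.cast_one, zero_sub]
  have : v - 1 = v + ((k - 1 : ℕ) : ZMod k) := by rw [h1]; ring
  rw [this, ZMod.val_add, ZMod.val_cast_of_lt (by omega : k - 1 < k)]

lemma mem_filter_val [NeZero k] {P : ℕ → Prop} [DecidablePred P] (x : ZMod k) :
    x ∈ Finset.univ.filter (fun y : ZMod k => P y.val) ↔ P x.val := by
  simp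

/-- cover criterion via natural number arithmetic -/
lemma cover_of [NeZero k] (hk : 3 ≤ k) (P : ℕ → Prop) [DecidablePred P]
    (h : ∀ a, a < k → P a ∨ P ((a + 1) % k)) :
    IsVCov (cycleG k) (Finset.univ.filter (fun x : ZMod k => P x.val)) := by
  intro i j hadj
  rw [mem_filter_val, mem_filter_val]
  rcases hadj.2 with h1 | h1
  · subst h1
    rw [val_add_one hk]
    exact h i.val (ZMod.val_lt i)
  · subst h1
    rw [val_add_one hk]
    exact (h j.val (ZMod.val_lt j)).symm

/-- minimality criterion via natural number arithmetic -/
lemma nbr_of [NeZero k] (hk : 3 ≤ k) (P : ℕ → Prop) [DecidablePred P]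
    (h : ∀ a, a < k → P a → ¬P ((a + 1) % k) ∨ ¬P ((a + (k - 1)) % k)) :
    ∀ v ∈ Finset.univ.filter (fun x : ZMod k => P x.val),
      (v + 1 ∉ Finset.univ.filter (fun x : ZMod k => P x.val) ∨
       v - 1 ∉ Finset.univ.filter (fun x : ZMod k => P x.val)) := by
  intro v hv
  rw [mem_filter_val] at hv
  rw [mem_filter_val, mem_filter_val, val_add_one hk, val_sub_one hk]
  exact h v.val (ZMod.val_lt v) hv

lemma mod_succ_eq (a : ℕ) (hk : 3 ≤ k) (ha : a < k) :
    (a + 1) % k = if a + 1 = k then 0 else a + 1 := by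
  split
  · next h => rw [h, Nat.mod_self]
  · next h => exact Nat.mod_eq_of_lt (by omega)

lemma mod_pred_eq (a : ℕ) (hk : 3 ≤ k) (ha : a < k) :
    (a + (k - 1)) % k = if a = 0 then k - 1 else a - 1 := by
  split
  · next h => subst h; rw [Nat.zero_add]; exact Nat.mod_eq_of_lt (by omega)
  · next h =>
      have h2 : a + (k - 1) = (a - 1) + k := by omega
      rw [h2, Nat.add_mod_right, Nat.mod_eq_of_lt (by omega)]

end helpers

set_option maxRecDepth 40000 in
theorem stmt12 (k : ℕ) (hk : 3 ≤ k) :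
    (∀ C₁ C₂ : Finset (ZMod k), IsMinVCov (cycleG k) C₁ → IsMinVCov (cycleG k) C₂ →
        C₁.card = C₂.card) ↔
      (k = 3 ∨ k = 4 ∨ k = 5 ∨ k = 7) := by
  constructor
  · intro h
    by_contra hnot
    push_neg at hnot
    obtain ⟨h3, h4, h5, h7⟩ := hnot
    have hk6 : 6 ≤ k := by omega
    haveI : NeZero k := ⟨by omega⟩
    have hP1d : DecidablePred (fun n : ℕ => n % 2 = 1 ∨ n = k - 1) := fun _ => inferInstance
    have hP2d : DecidablePred (fun n : ℕ => n = 2 ∨ n = 4 ∨ (n % 2 = 1 ∧ n ≠ 3) ∨ n = k - 1) :=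
      fun _ => inferInstance
    let C₁ : Finset (ZMod k) := Finset.univ.filter
      (fun x : ZMod k => x.val % 2 = 1 ∨ x.val = k - 1)
    let C₂ : Finset (ZMod k) := Finset.univ.filter
      (fun x : ZMod k => x.val = 2 ∨ x.val = 4 ∨ (x.val % 2 = 1 ∧ x.val ≠ 3) ∨ x.val = k - 1)
    have memC₁ : ∀ x : ZMod k, x ∈ C₁ ↔ (x.val % 2 = 1 ∨ x.val = k - 1) := fun x => by
      simp [C₁]
    have memC₂ : ∀ x : ZMod k, x ∈ C₂ ↔
        (x.val = 2 ∨ x.val = 4 ∨ (x.val % 2 = 1 ∧ x.val ≠ 3) ∨ x.val = k - 1) := fun x => by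
      simp [C₂]
    have min₁ : IsMinVCov (cycleG k) C₁ := by
      rw [minVCov_iff hk]
      constructor
      · refine cover_of hk (fun n => n % 2 = 1 ∨ n = k - 1) ?_
        intro a ha
        rw [mod_succ_eq a hk ha]
        split <;> omega
      · refine nbr_of hk (fun n => n % 2 = 1 ∨ n = k - 1) ?_
        intro a ha hPa
        rw [mod_succ_eq a hk ha, mod_pred_eq a hk ha]
        split <;> split <;> omega
    have min₂ : IsMinVCov (cycleG k) C₂ := by
      rw [minVCov_iff hk]
      constructor
      · refine cover_of hk (fun n => n = 2 ∨ n = 4 ∨ (n % 2 = 1 ∧ n ≠ 3) ∨ n = k - 1) ?_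
        intro a ha
        rw [mod_succ_eq a hk ha]
        split <;> omega
      · refine nbr_of hk (fun n => n = 2 ∨ n = 4 ∨ (n % 2 = 1 ∧ n ≠ 3) ∨ n = k - 1) ?_
        intro a ha hPa
        rw [mod_succ_eq a hk ha, mod_pred_eq a hk ha]
        split <;> split <;> omega
    -- card C₂ = card C₁ + 1
    have hval2 : ((2 : ℕ) : ZMod k).val = 2 := ZMod.val_cast_of_lt (by omega)
    have hval3 : ((3 : ℕ) : ZMod k).val = 3 := ZMod.val_cast_of_lt (by omega)
    have hval4 : ((4 : ℕ) : ZMod k).val = 4 := ZMod.val_cast_of_lt (by omega)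
    have hxeq : ∀ (x : ZMod k) (m : ℕ), m < k → (x = (m : ZMod k) ↔ x.val = m) := by
      intro x m hm
      constructor
      · rintro rfl; exact ZMod.val_cast_of_lt hm
      · intro hx
        have := ZMod.natCast_zmod_val x
        rw [hx] at this
        exact this.symm
    have hsplit : C₂ = insert ((2:ℕ) : ZMod k) (insert ((4:ℕ) : ZMod k)
        (C₁.erase ((3:ℕ) : ZMod k))) := by
      ext x
      rw [Finset.mem_insert, Finset.mem_insert, Finset.mem_erase,
        memC₂ x, memC₁ x, hxeq x 2 (by omega), hxeq x 4 (by omega)]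
      have hne3 : (x ≠ ((3:ℕ) : ZMod k)) ↔ x.val ≠ 3 := not_congr (hxeq x 3 (by omega))
      rw [hne3]
      omega
    have h3mem : ((3:ℕ) : ZMod k) ∈ C₁ := by
      rw [memC₁, hval3]
      omega
    have h4notmem : ((4:ℕ) : ZMod k) ∉ C₁.erase ((3:ℕ) : ZMod k) := by
      rw [Finset.mem_erase]
      rintro ⟨-, hmem⟩
      rw [memC₁, hval4] at hmem
      omega
    have h2notmem : ((2:ℕ) : ZMod k) ∉ insert ((4:ℕ) : ZMod k)
        (C₁.erase ((3:ℕ) : ZMod k)) := by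
      rw [Finset.mem_insert, Finset.mem_erase]
      rintro (heq | ⟨-, hmem⟩)
      · have := congrArg ZMod.val heq
        rw [hval2, hval4] at this
        omega
      · rw [memC₁, hval2] at hmem
        omega
    have hcard : C₂.card = C₁.card + 1 := by
      rw [hsplit, Finset.card_insert_of_notMem h2notmem,
        Finset.card_insert_of_notMem h4notmem, Finset.card_erase_of_mem h3mem]
      have : 1 ≤ C₁.card := Finset.card_pos.mpr ⟨_, h3mem⟩
      omega
    have := h C₁ C₂ min₁ min₂
    omega
  · have key : ∀ (m c : ℕ) (hm : 3 ≤ m),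
        (∀ C : Finset (ZMod m), (IsVCov (cycleG m) C ∧ ∀ v ∈ C, v + 1 ∉ C ∨ v - 1 ∉ C) →
          C.card = c) →
        ∀ C₁ C₂ : Finset (ZMod m), IsMinVCov (cycleG m) C₁ → IsMinVCov (cycleG m) C₂ →
          C₁.card = C₂.card := by
      intro m c hm hall C₁ C₂ h1 h2
      rw [minVCov_iff hm] at h1 h2
      rw [hall C₁ h1, hall C₂ h2]
    rintro (rfl | rfl | rfl | rfl)
    · exact key 3 2 (by norm_num) (by decide)
    · exact key 4 2 (by norm_num) (by decide)
    · exact key 5 3 (by norm_num) (by decide)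
    · exact key 7 4 (by norm_num) (by decide)
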